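/- Let σ ∈ C¹_b(ℝ) and φ the flow of y' = σ(y). Then ∂φ/∂x₂(x₁,x₂) = σ(x₁) · ∂φ/∂x₁(x₁,x₂) for all x₁, x₂ ∈ ℝ. -/

import Mathlib

open Set Filter Topology

/-- Global uniqueness of solutions of `y' = σ(y)` for Lipschitz `σ`. -/
lemma uniq_aux (σ : ℝ → ℝ) (K : NNReal) (hK : LipschitzWith K σ)
    (f g : ℝ → ℝ) (t₀ : ℝ)
    (hf : ∀ t, HasDerivAt f (σ (f t)) t)
    (hg : ∀ t, HasDerivAt g (σ (g t)) t)
    (h0 : f t₀ = g t₀) : ∀ t, f t = g t := by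
  intro t
  have ht : t ∈ Ioo (min t₀ t - 1) (max t₀ t + 1) :=
    ⟨by have := min_le_right t₀ t; linarith, by have := le_max_right t₀ t; linarith⟩
  have ht₀ : t₀ ∈ Ioo (min t₀ t - 1) (max t₀ t + 1) :=
    ⟨by have := min_le_left t₀ t; linarith, by have := le_max_left t₀ t; linarith⟩
  exact ODE_solution_unique_of_mem_Ioo (v := fun _ x => σ x) (s := fun _ => univ)
    (fun _ _ => hK.lipschitzOnWith) ht₀
    (fun s _ => ⟨hf s, trivial⟩) (fun s _ => ⟨hg s, trivial⟩) h0 ht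

theorem stmt_11 (σ : ℝ → ℝ) (hσ : ContDiff ℝ 1 σ)
    (hσb : ∃ C : ℝ, ∀ x, |σ x| ≤ C ∧ |deriv σ x| ≤ C)
    (φ : ℝ → ℝ → ℝ)
    (hφ0 : ∀ x₁ : ℝ, φ x₁ 0 = x₁)
    (hφ : ∀ x₁ x₂ : ℝ, HasDerivAt (φ x₁) (σ (φ x₁ x₂)) x₂) :
    ∀ x₁ x₂ : ℝ, deriv (φ x₁) x₂ = σ x₁ * deriv (fun x => φ x x₂) x₁ := by
  obtain ⟨C, hC⟩ := hσb
  have hC0 : 0 ≤ C := le_trans (abs_nonneg _) (hC 0).1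
  have hK : LipschitzWith ⟨C, hC0⟩ σ := by
    apply lipschitzWith_of_nnnorm_deriv_le (hσ.differentiable one_ne_zero)
    intro x
    refine NNReal.coe_le_coe.1 (?_ : ((‖deriv σ x‖₊ : NNReal) : ℝ) ≤ C)
    simpa [Real.norm_eq_abs] using (hC x).2
  have uniq := uniq_aux σ _ hK
  intro x₁ x₂
  -- the time derivative
  have hL : deriv (φ x₁) x₂ = σ (φ x₁ x₂) := (hφ x₁ x₂).deriv
  by_cases hz : σ x₁ = 0
  · -- the constant function x₁ is the solution
    have hconst : ∀ t, φ x₁ t = x₁ := by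
      refine uniq (φ x₁) (fun _ => x₁) 0 (hφ x₁) (fun t => ?_) (hφ0 x₁)
      simpa [hz] using (hasDerivAt_const t x₁)
    rw [hL, hconst x₂, hz, zero_mul]
  · -- flow property
    have hflow : ∀ s t : ℝ, φ x₁ (s + t) = φ (φ x₁ s) t := by
      intro s t
      refine uniq (fun t => φ x₁ (s + t)) (φ (φ x₁ s)) 0 (fun u => ?_)
        (hφ (φ x₁ s)) (by simp [hφ0]) t
      have := (hφ x₁ (s + u)).comp u
        ((hasDerivAt_const u s).add (hasDerivAt_id u))
      simpa [Function.comp_def] using this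
    -- strict derivative of φ x₁ at 0
    have hs : HasStrictDerivAt (φ x₁) (σ x₁) 0 := by
      have : HasStrictDerivAt (φ x₁) (σ (φ x₁ 0)) 0 := by
        apply hasStrictDerivAt_of_hasDerivAt_of_continuousAt
          (Filter.Eventually.of_forall fun t => hφ x₁ t)
        have hφc : Continuous (φ x₁) :=
          Differentiable.continuous (fun t => (hφ x₁ t).differentiableAt)
        exact (hσ.continuous.comp hφc).continuousAt
      rwa [hφ0] at this
    set g := hs.localInverse (φ x₁) (σ x₁) 0 hz with hg
    have hfa : φ x₁ 0 = x₁ := hφ0 x₁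
    have hginv : ∀ᶠ y in 𝓝 x₁, φ x₁ (g y) = y := by
      have := (hs.hasStrictFDerivAt_equiv hz).eventually_right_inverse
      rwa [hfa] at this
    have hg0 : g x₁ = 0 := by
      have := (hs.hasStrictFDerivAt_equiv hz).localInverse_apply_image
      rwa [hfa] at this
    have hgderiv : HasStrictDerivAt g (σ x₁)⁻¹ x₁ := by
      have := hs.to_localInverse (hf' := hz)
      rwa [hfa] at this
    -- h y = φ x₁ (x₂ + g y) agrees with y ↦ φ y x₂ near x₁
    have heq : (fun y => φ x₁ (x₂ + g y)) =ᶠ[𝓝 x₁] fun y => φ y x₂ := by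
      filter_upwards [hginv] with y hy
      calc φ x₁ (x₂ + g y) = φ x₁ (g y + x₂) := by ring_nf
        _ = φ (φ x₁ (g y)) x₂ := hflow (g y) x₂
        _ = φ y x₂ := by rw [hy]
    have hh : HasDerivAt (fun y => φ x₁ (x₂ + g y)) (σ (φ x₁ x₂) * (σ x₁)⁻¹) x₁ := by
      have h1 : HasDerivAt (fun y => x₂ + g y) ((σ x₁)⁻¹) x₁ := by
        simpa using hgderiv.hasDerivAt
      have h2 : HasDerivAt (φ x₁) (σ (φ x₁ (x₂ + g x₁))) (x₂ + g x₁) := hφ x₁ _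
      have := h2.comp x₁ h1
      simpa [hg0, Function.comp_def] using this
    have : HasDerivAt (fun y => φ y x₂) (σ (φ x₁ x₂) * (σ x₁)⁻¹) x₁ := by
      exact hh.congr_of_eventuallyEq heq.symm
    rw [hL, this.deriv]
    field_simp
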